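/- Let f : ℝⁿ → ℝ be continuously differentiable and let x : [0,∞) → ℝⁿ be a gradient flow line of f, i.e. x is differentiable with x'(t) = ∇f(x(t)) for all t ≥ 0. Suppose there exist times tᵢ → ∞ such that x(tᵢ) → x_∞. Then: (i) lim_{t→∞} f(x(t)) = f(x_∞); (ii) x_∞ is a critical point of f, i.e. ∇f(x_∞) = 0; and (iii) ∫₀^∞ |x'(t)|² dt < ∞, and in fact this integral equals f(x_∞) − f(x(0)). -/

import Mathlib

set_option maxHeartbeats 1000000


open Filter Set MeasureTheory

/-- A gradient flow line of a `C¹` function with a limit point `xlim` satisfies: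
(i) `f ∘ x → f xlim`; (ii) `xlim` is a critical point; (iii) `∫₀^∞ |x'|² = f xlim − f (x 0) < ∞`. -/
theorem gradient_flow_line_limit_point
    {n : ℕ} (f : EuclideanSpace ℝ (Fin n) → ℝ) (hf : ContDiff ℝ 1 f)
    (x : ℝ → EuclideanSpace ℝ (Fin n))
    (hx : ∀ t : ℝ, 0 ≤ t → HasDerivAt x (gradient f (x t)) t)
    (t : ℕ → ℝ) (ht : Tendsto t atTop atTop)
    (xlim : EuclideanSpace ℝ (Fin n))
    (hlim : Tendsto (fun i => x (t i)) atTop (nhds xlim)) :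
    Tendsto (fun s => f (x s)) atTop (nhds (f xlim)) ∧
    gradient f xlim = 0 ∧
    IntegrableOn (fun s => ‖gradient f (x s)‖ ^ 2) (Ici (0 : ℝ)) ∧
    ∫ s in Ici (0 : ℝ), ‖gradient f (x s)‖ ^ 2 = f xlim - f (x 0) := by
  set h : ℝ → ℝ := fun s => ‖gradient f (x s)‖ ^ 2 with hh
  set L : ℝ := f xlim with hL
  -- continuity facts
  have contG : Continuous (gradient f) := by
    unfold gradient
    exact (InnerProductSpace.toDual ℝ _).symm.continuous.comp (hf.continuous_fderiv one_ne_zero)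
  have contf : Continuous f := hf.continuous
  have contx : ContinuousOn x (Ici 0) := fun s hs => (hx s hs).continuousAt.continuousWithinAt
  have conth : ContinuousOn h (Ici 0) := by
    exact ((contG.comp_continuousOn contx).norm.pow 2)
  have contxG : ContinuousOn (fun s => ‖gradient f (x s)‖) (Ici 0) :=
    (contG.comp_continuousOn contx).norm
  -- derivative of f ∘ x
  have hder : ∀ s : ℝ, 0 ≤ s → HasDerivAt (fun u => f (x u)) (h s) s := by
    intro s hs
    have hdf : DifferentiableAt ℝ f (x s) := hf.differentiable one_ne_zero (x s)
    have h1 := hdf.hasGradientAt.hasFDerivAt.comp_hasDerivAt s (hx s hs)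
    have h2 : (InnerProductSpace.toDual ℝ _) (gradient f (x s)) (gradient f (x s))
        = ‖gradient f (x s)‖ ^ 2 := by
      rw [InnerProductSpace.toDual_apply_apply, real_inner_self_eq_norm_sq]
    rw [h2] at h1
    exact h1
  -- interval integrability
  have hint : ∀ a b : ℝ, 0 ≤ a → a ≤ b → IntervalIntegrable h volume a b := by
    intro a b ha hab
    refine (conth.mono ?_).intervalIntegrable
    rw [uIcc_of_le hab]
    exact fun u hu => le_trans ha hu.1
  -- FTC
  have hftc : ∀ a b : ℝ, 0 ≤ a → a ≤ b → ∫ s in a..b, h s = f (x b) - f (x a) := by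
    intro a b ha hab
    refine intervalIntegral.integral_eq_sub_of_hasDerivAt (fun s hs => hder s ?_)
      (hint a b ha hab)
    rw [uIcc_of_le hab] at hs
    exact le_trans ha hs.1
  -- monotonicity
  have hmono : ∀ a b : ℝ, 0 ≤ a → a ≤ b → f (x a) ≤ f (x b) := by
    intro a b ha hab
    have h1 := hftc a b ha hab
    have h2 : (0 : ℝ) ≤ ∫ s in a..b, h s :=
      intervalIntegral.integral_nonneg hab (fun u _ => sq_nonneg _)
    linarith
  -- f (x (t i)) → L
  have hfl : Tendsto (fun i => f (x (t i))) atTop (nhds L) :=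
    (contf.tendsto xlim).comp hlim
  -- f (x s) ≤ L for s ≥ 0
  have hle : ∀ s : ℝ, 0 ≤ s → f (x s) ≤ L := by
    intro s hs
    refine ge_of_tendsto hfl ?_
    filter_upwards [ht.eventually_ge_atTop s] with i hi using hmono s (t i) hs hi
  -- (i)
  have part1 : Tendsto (fun s => f (x s)) atTop (nhds L) := by
    rw [Metric.tendsto_atTop]
    intro ε hε
    have hev : ∀ᶠ i in atTop, dist (f (x (t i))) L < ε ∧ 0 ≤ t i :=
      (Metric.tendsto_nhds.mp hfl ε hε).and (ht.eventually_ge_atTop 0)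
    obtain ⟨i, hi1, hi2⟩ := hev.exists
    refine ⟨t i, fun s hs => ?_⟩
    rw [Real.dist_eq] at hi1 ⊢
    have h1 : f (x (t i)) ≤ f (x s) := hmono (t i) s hi2 hs
    have h2 : f (x s) ≤ L := hle s (le_trans hi2 hs)
    rw [abs_lt] at hi1 ⊢
    constructor <;> linarith [hi1.1, hi1.2]
  -- integrability on Ioi 0
  have hIoi : IntegrableOn h (Ioi 0) := by
    have hIoc : ∀ i : ℕ, IntegrableOn h (Ioc 0 (i : ℝ)) := fun i =>
      (hint 0 i le_rfl (Nat.cast_nonneg i)).1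
    refine integrableOn_Ioi_of_intervalIntegral_norm_bounded (L - f (x 0)) 0
      hIoc tendsto_natCast_atTop_atTop ?_
    filter_upwards with i
    have heq : ∫ s in (0:ℝ)..(i:ℝ), ‖h s‖ = ∫ s in (0:ℝ)..(i:ℝ), h s := by
      refine intervalIntegral.integral_congr (fun u _ => ?_)
      exact Real.norm_of_nonneg (sq_nonneg _)
    rw [heq, hftc 0 i le_rfl (Nat.cast_nonneg i)]
    have := hle i (Nat.cast_nonneg i)
    linarith
  have hIci : IntegrableOn h (Ici 0) := Iff.mpr integrableOn_Ici_iff_integrableOn_Ioi hIoi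
  -- tail integrals
  have htail : ∀ a : ℝ, 0 ≤ a → ∫ s in Ioi a, h s = L - f (x a) := by
    intro a ha
    have hIa : IntegrableOn h (Ioi a) := hIoi.mono_set (Ioi_subset_Ioi ha)
    have h1 : Tendsto (fun i : ℕ => ∫ s in a..(a + i : ℝ), h s) atTop
        (nhds (∫ s in Ioi a, h s)) :=
      intervalIntegral_tendsto_integral_Ioi a hIa
        (tendsto_atTop_add_const_left _ a tendsto_natCast_atTop_atTop)
    have h2 : Tendsto (fun i : ℕ => ∫ s in a..(a + i : ℝ), h s) atTop
        (nhds (L - f (x a))) := by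
      have h3 : (fun i : ℕ => ∫ s in a..(a + i : ℝ), h s)
          = fun i : ℕ => f (x (a + i)) - f (x a) := by
        funext i
        exact hftc a (a + i) ha (by linarith [Nat.cast_nonneg (α := ℝ) i])
      rw [h3]
      exact (part1.comp (tendsto_atTop_add_const_left _ a tendsto_natCast_atTop_atTop)).sub_const _
    exact tendsto_nhds_unique h1 h2
  -- value of the integral
  have part4 : ∫ s in Ici (0:ℝ), h s = L - f (x 0) := by
    rw [integral_Ici_eq_integral_Ioi]
    exact htail 0 le_rfl
  -- (ii)
  have part2 : gradient f xlim = 0 := by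
    by_contra hne
    set c : ℝ := ‖gradient f xlim‖ with hc
    have hcpos : 0 < c := norm_pos_iff.mpr hne
    -- ball where ‖gradient‖ ≥ c/2
    obtain ⟨δ₀, hδ₀, hball₀⟩ := Metric.continuousAt_iff.mp (contG.norm.continuousAt (x := xlim))
      (c / 2) (by linarith)
    set δ : ℝ := δ₀ / 2 with hδd
    have hδpos : 0 < δ := by positivity
    have hball : ∀ y, dist y xlim ≤ δ → c / 2 ≤ ‖gradient f y‖ := by
      intro y hy
      have := hball₀ (lt_of_le_of_lt hy (by linarith))
      rw [Real.dist_eq, abs_lt] at this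
      linarith [this.1]
    -- choose a good index
    have hev : ∀ᶠ i in atTop, 0 ≤ t i ∧ dist (x (t i)) xlim < δ / 2 ∧
        L - f (x (t i)) < min (c * δ / 4) (c ^ 2 / 4) := by
      have e1 := ht.eventually_ge_atTop 0
      have e2 : ∀ᶠ i in atTop, dist (x (t i)) xlim < δ / 2 :=
        Metric.tendsto_nhds.mp hlim (δ / 2) (by positivity)
      have e3 : ∀ᶠ i in atTop, L - f (x (t i)) < min (c * δ / 4) (c ^ 2 / 4) := by
        have : Tendsto (fun i => L - f (x (t i))) atTop (nhds 0) := by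
          simpa using hfl.const_sub L
        refine this.eventually_lt_const ?_
        exact lt_min (by positivity) (by positivity)
      filter_upwards [e1, e2, e3] with i h1 h2 h3 using ⟨h1, h2, h3⟩
    obtain ⟨i, ha0, hadist, hatail⟩ := hev.exists
    set a : ℝ := t i with haa
    have htaila : ∫ s in Ioi a, h s < min (c * δ / 4) (c ^ 2 / 4) := by
      rw [htail a ha0]; exact hatail
    have hIa : IntegrableOn h (Ioi a) := hIoi.mono_set (Ioi_subset_Ioi ha0)
    have hbound : ∀ b : ℝ, a ≤ b → ∫ s in a..b, h s ≤ ∫ s in Ioi a, h s := by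
      intro b hab
      rw [intervalIntegral.integral_of_le hab]
      refine setIntegral_mono_set hIa ?_ (Filter.Eventually.of_forall Ioc_subset_Ioi_self)
      exact Filter.Eventually.of_forall (fun u => sq_nonneg _)
    -- claim: x stays in the δ-ball on [a, a+1]
    have claim : ∀ s ∈ Icc a (a + 1), dist (x s) xlim < δ := by
      by_contra hcl
      push_neg at hcl
      obtain ⟨s₁, hs₁, hs₁d⟩ := hcl
      set A : Set ℝ := {s ∈ Icc a (a + 1) | δ ≤ dist (x s) xlim} with hA
      have hAne : A.Nonempty := ⟨s₁, hs₁, hs₁d⟩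
      have hAbdd : BddBelow A := ⟨a, fun u hu => hu.1.1⟩
      have hAclosed : IsClosed A := by
        have hcd : ContinuousOn (fun s => dist (x s) xlim) (Icc a (a + 1)) :=
          (continuous_id.dist continuous_const).comp_continuousOn
            (contx.mono (fun u hu => le_trans ha0 hu.1))
        have := hcd.preimage_isClosed_of_isClosed isClosed_Icc (isClosed_Ici (a := δ))
        exact this
      set s₀ : ℝ := sInf A with hs₀
      have hs₀A : s₀ ∈ A := hAclosed.csInf_mem hAne hAbdd
      have hs₀Icc : s₀ ∈ Icc a (a + 1) := hs₀A.1
      have hs₀d : δ ≤ dist (x s₀) xlim := hs₀A.2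
      have has₀ : a < s₀ := by
        rcases lt_or_eq_of_le hs₀Icc.1 with h1 | h1
        · exact h1
        · exfalso; rw [← h1] at hs₀d; linarith
      -- everything in [a, s₀] is within δ of xlim
      have hlt : ∀ u ∈ Ico a s₀, dist (x u) xlim < δ := by
        intro u hu
        by_contra hud
        push_neg at hud
        have huA : u ∈ A := ⟨⟨hu.1, le_trans hu.2.le hs₀Icc.2⟩, hud⟩
        exact absurd (csInf_le hAbdd huA) (not_le.mpr hu.2)
      have hub : ∀ u ∈ Icc a s₀, dist (x u) xlim ≤ δ := by
        intro u hu
        rcases lt_or_eq_of_le hu.2 with h1 | h1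
        · exact (hlt u ⟨hu.1, h1⟩).le
        · -- u = s₀ : limit from the left
          rw [h1]
          have hca : ContinuousAt (fun s => dist (x s) xlim) s₀ :=
            ((hx s₀ (le_trans ha0 has₀.le)).continuousAt).dist continuousAt_const
          have hcw : ContinuousWithinAt (fun s => dist (x s) xlim) (Ico a s₀) s₀ :=
            hca.continuousWithinAt
          have hnb : (nhdsWithin s₀ (Ico a s₀)).NeBot := by
            rw [nhdsWithin_Ico_eq_nhdsLT has₀]
            infer_instance
          refine le_of_tendsto hcw ?_
          filter_upwards [self_mem_nhdsWithin] with v hv using (hlt v hv).le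
      -- displacement estimate
      have hdisp : dist (x s₀) (x a) ≤ (2 / c) * ∫ s in Ioi a, h s := by
        have hxftc : x s₀ - x a = ∫ u in a..s₀, gradient f (x u) := by
          symm
          refine intervalIntegral.integral_eq_sub_of_hasDerivAt (fun u hu => ?_) ?_
          · rw [uIcc_of_le has₀.le] at hu
            exact hx u (le_trans ha0 hu.1)
          · have hco : ContinuousOn (fun u => gradient f (x u)) (uIcc a s₀) := by
              rw [uIcc_of_le has₀.le]
              exact contG.comp_continuousOn
                (contx.mono (fun u hu => le_trans ha0 hu.1))
            exact hco.intervalIntegrable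
        have h1 : dist (x s₀) (x a) ≤ ∫ u in a..s₀, ‖gradient f (x u)‖ := by
          rw [dist_eq_norm, hxftc]
          exact intervalIntegral.norm_integral_le_integral_norm has₀.le
        have h2 : ∫ u in a..s₀, ‖gradient f (x u)‖ ≤ ∫ u in a..s₀, (2 / c) * h u := by
          refine intervalIntegral.integral_mono_on has₀.le ?_ ?_ ?_
          · have hco : ContinuousOn (fun u => ‖gradient f (x u)‖) (uIcc a s₀) := by
              rw [uIcc_of_le has₀.le]
              exact contxG.mono (fun u hu => le_trans ha0 hu.1)
            exact hco.intervalIntegrable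
          · exact (hint a s₀ ha0 has₀.le).const_mul _
          · intro u hu
            have hb := hball (x u) (hub u hu)
            have hnn : (0:ℝ) ≤ ‖gradient f (x u)‖ := norm_nonneg _
            show ‖gradient f (x u)‖ ≤ 2 / c * ‖gradient f (x u)‖ ^ 2
            rw [div_mul_eq_mul_div, le_div_iff₀ hcpos]
            nlinarith [mul_le_mul_of_nonneg_left hb hnn]
        have h3 : ∫ u in a..s₀, (2 / c) * h u = (2 / c) * ∫ u in a..s₀, h u := by
          exact intervalIntegral.integral_const_mul _ _
        have h4 : ∫ u in a..s₀, h u ≤ ∫ s in Ioi a, h s := hbound s₀ has₀.le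
        have h5 : (0:ℝ) ≤ 2 / c := by positivity
        calc dist (x s₀) (x a) ≤ ∫ u in a..s₀, ‖gradient f (x u)‖ := h1
          _ ≤ (2 / c) * ∫ u in a..s₀, h u := by rw [← h3]; exact h2
          _ ≤ (2 / c) * ∫ s in Ioi a, h s := mul_le_mul_of_nonneg_left h4 h5
      have htail1 : ∫ s in Ioi a, h s < c * δ / 4 := lt_of_lt_of_le htaila (min_le_left _ _)
      have : δ ≤ dist (x s₀) xlim := hs₀d
      have h6 : dist (x s₀) xlim ≤ dist (x s₀) (x a) + dist (x a) xlim := dist_triangle _ _ _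
      have h7 : (2 / c) * ∫ s in Ioi a, h s < δ / 2 := by
        rw [div_mul_eq_mul_div, div_lt_iff₀ hcpos]
        nlinarith
      linarith
    -- now h ≥ c²/4 on [a, a+1]
    have hlow : ∫ s in a..(a+1), h s ≥ c ^ 2 / 4 := by
      have h1 : ∫ s in a..(a+1), (c ^ 2 / 4 : ℝ) ≤ ∫ s in a..(a+1), h s := by
        refine intervalIntegral.integral_mono_on (by linarith) intervalIntegrable_const
          (hint a (a+1) ha0 (by linarith)) ?_
        intro u hu
        have hb := hball (x u) (claim u hu).le
        rw [hh]
        nlinarith [norm_nonneg (gradient f (x u))]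
      rw [intervalIntegral.integral_const] at h1
      simpa using h1
    have htail2 : ∫ s in Ioi a, h s < c ^ 2 / 4 := lt_of_lt_of_le htaila (min_le_right _ _)
    have := hbound (a + 1) (by linarith)
    linarith
  exact ⟨part1, part2, hIci, part4⟩
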